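/- The function d_𝕍 on the set 𝕍 of finite 0–1 sequences defined by d_𝕍(u,v) := 2^{−|u∧v|} − (2^{−|u|} + 2^{−|v|})/2 is a metric on 𝕍, and it induces the discrete topology on 𝕍. -/
import Mathlib


/-- Longest common prefix of two 0-1 sequences. -/
def lcp : List Bool → List Bool → List Bool
  | a :: as, b :: bs => if a = b then a :: lcp as bs else []
  | _, _ => []

/-- The metric `d_𝕍` on the set of finite 0-1 sequences. -/
noncomputable def dV (u v : List Bool) : ℝ :=
  2 ^ (-((lcp u v).length : ℤ)) - (2 ^ (-(u.length : ℤ)) + 2 ^ (-(v.length : ℤ))) / 2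

lemma lcp_nil_left (v : List Bool) : lcp [] v = [] := by cases v <;> rfl

lemma lcp_nil_right (u : List Bool) : lcp u [] = [] := by cases u <;> rfl

lemma lcp_comm : ∀ u v : List Bool, lcp u v = lcp v u
  | [], v => by rw [lcp_nil_left, lcp_nil_right]
  | a :: as, [] => by rw [lcp_nil_left, lcp_nil_right]
  | a :: as, b :: bs => by
    show (if a = b then a :: lcp as bs else []) = (if b = a then b :: lcp bs as else [])
    by_cases h : a = b
    · subst h; simp [lcp_comm as bs]
    · simp [h, Ne.symm h]

lemma lcp_prefix_left : ∀ u v : List Bool, lcp u v <+: u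
  | [], v => by simp [lcp_nil_left]
  | a :: as, [] => by simp [lcp_nil_right]
  | a :: as, b :: bs => by
    show (if a = b then a :: lcp as bs else []) <+: a :: as
    by_cases h : a = b
    · obtain ⟨t, ht⟩ := lcp_prefix_left as bs
      exact ⟨t, by simp [h, ht]⟩
    · simp [h]

lemma lcp_prefix_right (u v : List Bool) : lcp u v <+: v := by
  rw [lcp_comm]; exact lcp_prefix_left v u

lemma lcp_length_le_left (u v : List Bool) : (lcp u v).length ≤ u.length :=
  (lcp_prefix_left u v).length_le

lemma lcp_length_le_right (u v : List Bool) : (lcp u v).length ≤ v.length :=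
  (lcp_prefix_right u v).length_le

lemma lcp_self : ∀ u : List Bool, lcp u u = u
  | [] => rfl
  | a :: as => by
    show (if a = a then a :: lcp as as else []) = a :: as
    simp [lcp_self as]

lemma lcp_min : ∀ u v w : List Bool,
    min (lcp u v).length (lcp v w).length ≤ (lcp u w).length
  | [], v, w => by simp [lcp_nil_left]
  | u, v, [] => by simp [lcp_nil_right]
  | a :: as, [], c :: cs => by simp [lcp_nil_left, lcp_nil_right]
  | a :: as, b :: bs, c :: cs => by
    show min (if a = b then a :: lcp as bs else []).length
        (if b = c then b :: lcp bs cs else []).length ≤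
        (if a = c then a :: lcp as cs else []).length
    by_cases hab : a = b
    · by_cases hbc : b = c
      · have hac : a = c := hab.trans hbc
        subst hab; subst hbc
        have := lcp_min as bs cs
        rw [if_pos rfl, if_pos rfl, if_pos rfl]
        simp only [List.length_cons]
        omega
      · simp [hbc]
    · simp [hab]

lemma two_zpow_pos (n : ℤ) : (0:ℝ) < 2 ^ n := zpow_pos (by norm_num) n

lemma two_zpow_mono {m n : ℤ} (h : m ≤ n) : (2:ℝ) ^ m ≤ 2 ^ n :=
  zpow_le_zpow_right₀ (by norm_num) h

lemma two_zpow_le {m n : ℤ} (h : m ≤ n) : (2:ℝ) ^ (-n) ≤ 2 ^ (-m) :=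
  zpow_le_zpow_right₀ (by norm_num) (neg_le_neg h)

lemma dV_nonneg (u v : List Bool) : 0 ≤ dV u v := by
  unfold dV
  have h1 : (2:ℝ) ^ (-(u.length : ℤ)) ≤ 2 ^ (-((lcp u v).length : ℤ)) :=
    two_zpow_le (by exact_mod_cast lcp_length_le_left u v)
  have h2 : (2:ℝ) ^ (-(v.length : ℤ)) ≤ 2 ^ (-((lcp u v).length : ℤ)) :=
    two_zpow_le (by exact_mod_cast lcp_length_le_right u v)
  linarith

lemma dV_eq_zero_iff (u v : List Bool) : dV u v = 0 ↔ u = v := by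
  constructor
  · intro h
    unfold dV at h
    have h1 : (2:ℝ) ^ (-(u.length : ℤ)) ≤ 2 ^ (-((lcp u v).length : ℤ)) :=
      two_zpow_le (by exact_mod_cast lcp_length_le_left u v)
    have h2 : (2:ℝ) ^ (-(v.length : ℤ)) ≤ 2 ^ (-((lcp u v).length : ℤ)) :=
      two_zpow_le (by exact_mod_cast lcp_length_le_right u v)
    have e1 : (2:ℝ) ^ (-(u.length : ℤ)) = 2 ^ (-((lcp u v).length : ℤ)) := by linarith
    have e2 : (2:ℝ) ^ (-(v.length : ℤ)) = 2 ^ (-((lcp u v).length : ℤ)) := by linarith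
    have l1 : (lcp u v).length = u.length := by
      have := (zpow_right_injective₀ (by norm_num : (0:ℝ) < 2) (by norm_num)) e1
      omega
    have l2 : (lcp u v).length = v.length := by
      have := (zpow_right_injective₀ (by norm_num : (0:ℝ) < 2) (by norm_num)) e2
      omega
    have hu : lcp u v = u := (lcp_prefix_left u v).eq_of_length l1
    have hv : lcp u v = v := (lcp_prefix_right u v).eq_of_length l2
    exact hu ▸ hv
  · rintro rfl
    unfold dV
    rw [lcp_self]
    ring

lemma dV_comm (u v : List Bool) : dV u v = dV v u := by
  unfold dV
  rw [lcp_comm]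
  ring

lemma dV_triangle (u v w : List Bool) : dV u w ≤ dV u v + dV v w := by
  unfold dV
  have hmin : min (lcp u v).length (lcp v w).length ≤ (lcp u w).length := lcp_min u v w
  have key : (2:ℝ) ^ (-((lcp u w).length : ℤ)) + 2 ^ (-(v.length : ℤ)) ≤
      2 ^ (-((lcp u v).length : ℤ)) + 2 ^ (-((lcp v w).length : ℤ)) := by
    rcases le_total ((lcp u v).length) ((lcp v w).length) with h | h
    · have h1 : (2:ℝ) ^ (-((lcp u w).length : ℤ)) ≤ 2 ^ (-((lcp u v).length : ℤ)) :=
        two_zpow_le (by exact_mod_cast by omega : ((lcp u v).length : ℤ) ≤ (lcp u w).length)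
      have h2 : (2:ℝ) ^ (-(v.length : ℤ)) ≤ 2 ^ (-((lcp v w).length : ℤ)) :=
        two_zpow_le (by exact_mod_cast lcp_length_le_left v w)
      linarith
    · have h1 : (2:ℝ) ^ (-((lcp u w).length : ℤ)) ≤ 2 ^ (-((lcp v w).length : ℤ)) :=
        two_zpow_le (by exact_mod_cast by omega : ((lcp v w).length : ℤ) ≤ (lcp u w).length)
      have h2 : (2:ℝ) ^ (-(v.length : ℤ)) ≤ 2 ^ (-((lcp u v).length : ℤ)) :=
        two_zpow_le (by exact_mod_cast lcp_length_le_right u v)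
      linarith
  linarith

lemma dV_isolated (u : List Bool) :
    ∃ ε : ℝ, 0 < ε ∧ ∀ v : List Bool, dV u v < ε → v = u := by
  refine ⟨2 ^ (-(u.length : ℤ) - 2), two_zpow_pos _, fun v hv => ?_⟩
  by_contra hne
  apply absurd hv
  push_neg
  unfold dV
  set L := (lcp u v).length with hL
  have hLu : L ≤ u.length := lcp_length_le_left u v
  have hLv : L ≤ v.length := lcp_length_le_right u v
  have hne' : ¬ (L = u.length ∧ L = v.length) := by
    rintro ⟨h1, h2⟩
    have hu : lcp u v = u := (lcp_prefix_left u v).eq_of_length h1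
    have hv' : lcp u v = v := (lcp_prefix_right u v).eq_of_length h2
    exact hne (hu.symm.trans hv').symm
  rcases Nat.lt_or_ge L u.length with hlt | hge
  · -- L < |u| : 2^{-|u|} ≤ 2^{-L-1}, 2^{-|v|} ≤ 2^{-L}
    have h1 : (2:ℝ) ^ (-(u.length : ℤ)) ≤ 2 ^ (-(L:ℤ) - 1) :=
      two_zpow_mono (by omega)
    have h2 : (2:ℝ) ^ (-(v.length : ℤ)) ≤ 2 ^ (-(L:ℤ)) :=
      two_zpow_mono (by omega)
    have h3 : (2:ℝ) ^ (-(u.length : ℤ) - 2) ≤ 2 ^ (-(L:ℤ) - 2) :=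
      two_zpow_mono (by omega)
    have e1 : (2:ℝ) ^ (-(L:ℤ) - 1) = 2 ^ (-(L:ℤ)) / 2 := by
      rw [zpow_sub₀ (by norm_num : (2:ℝ) ≠ 0)]; norm_num
    have e2 : (2:ℝ) ^ (-(L:ℤ) - 2) = 2 ^ (-(L:ℤ)) / 4 := by
      rw [zpow_sub₀ (by norm_num : (2:ℝ) ≠ 0)]; norm_num
    nlinarith [two_zpow_pos (-(L:ℤ))]
  · -- L = |u|, and L < |v|
    have hLu' : L = u.length := le_antisymm hLu hge
    have hlt : L < v.length := by
      rcases Nat.lt_or_ge L v.length with h | h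
      · exact h
      · exact absurd ⟨hLu', le_antisymm hLv h⟩ hne'
    have h2 : (2:ℝ) ^ (-(v.length : ℤ)) ≤ 2 ^ (-(L:ℤ) - 1) :=
      two_zpow_mono (by omega)
    have e1 : (2:ℝ) ^ (-(L:ℤ) - 1) = 2 ^ (-(L:ℤ)) / 2 := by
      rw [zpow_sub₀ (by norm_num : (2:ℝ) ≠ 0)]; norm_num
    have e2 : (2:ℝ) ^ (-(u.length:ℤ) - 2) = 2 ^ (-(L:ℤ)) / 4 := by
      rw [hLu', zpow_sub₀ (by norm_num : (2:ℝ) ≠ 0)]; norm_num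
    rw [hLu'] at *
    nlinarith [two_zpow_pos (-(u.length:ℤ))]

theorem stmt_7 :
    (∀ u v : List Bool, 0 ≤ dV u v) ∧
    (∀ u v : List Bool, dV u v = 0 ↔ u = v) ∧
    (∀ u v : List Bool, dV u v = dV v u) ∧
    (∀ u v w : List Bool, dV u w ≤ dV u v + dV v w) ∧
    -- the induced topology is discrete: every point is isolated
    (∀ u : List Bool, ∃ ε : ℝ, 0 < ε ∧ ∀ v : List Bool, dV u v < ε → v = u) :=
  ⟨dV_nonneg, dV_eq_zero_iff, dV_comm, dV_triangle, dV_isolated⟩
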